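/- arXiv:1311.3003 — 4 statements merged into one kernel-verified Lean document; each statement's English description precedes it below -/
import Mathlib

section
/- Let 0 < μ₁ ≤ ν₁ and μ₂ ≤ ν₂ with μ₁ < μ₂ and ν₁ < ν₂. Assume ĉ(ν₁,ν₂) + b̂(ν₁) > 0 and b̂(ν₁)/(ĉ(ν₁,ν₂) + b̂(ν₁)) < 1/2. Then (ĉ(ν₁,ν₂) + b̂(ν₁))·(1 − h(b̂(ν₁)/(ĉ(ν₁,ν₂) + b̂(ν₁)))) ≤ (ĉ(μ₁,μ₂) + b̂(μ₁))·(1 − h(b̂(μ₁)/(ĉ(μ₁,μ₂) + b̂(μ₁)))). That is, the quantity (ĉ(μ₁,μ₂)+b̂(μ₁))(1−h(b̂(μ₁)/(ĉ(μ₁,μ₂)+b̂(μ₁)))) is monotonically decreasing in both μ₁ and μ₂ on the region where the phase-error ratio is below 1/2. -/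
/-- Binary entropy function (base-2). Note `Real.logb 2 0 = 0`, so `binEnt 0 = binEnt 1 = 0`. -/
noncomputable def binEnt (x : ℝ) : ℝ :=
  -x * Real.logb 2 x - (1 - x) * Real.logb 2 (1 - x)

/-- Estimate `b̂(μ)` of the phase-error detection rate of the single photon pulse. -/
noncomputable def bHat (α s p₀ μ : ℝ) : ℝ :=
  (s * (1 - Real.exp (-α * μ)) * Real.exp μ + (p₀ / 2) * (Real.exp μ - 1)) / μ

/-- Estimate `ĉ(μ₁,μ₂)` of the rate that the single photon pulse is detected
without phase error. -/
noncomputable def cHat (α s p₀ μ₁ μ₂ : ℝ) : ℝ :=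
  (μ₂ ^ 2 * Real.exp μ₁ * ((1 - s) * (1 - Real.exp (-α * μ₁)) + (p₀ / 2) * (1 - Real.exp (-μ₁)))
    - μ₁ ^ 2 * Real.exp μ₂ * ((1 - s) * (1 - Real.exp (-α * μ₂)) + (p₀ / 2) * (1 - Real.exp (-μ₂))))
  / (μ₁ * μ₂ * (μ₂ - μ₁))

open Real Set

noncomputable def serf (β μ : ℝ) : ℝ :=
  ∑' n : ℕ, ((1 - β ^ (n+1)) / ((n+1).factorial : ℝ)) * μ ^ n

lemma serf_summable {β : ℝ} (hβ0 : 0 ≤ β) (hβ1 : β ≤ 1) {μ : ℝ} (hμ : 0 ≤ μ) :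
    Summable (fun n : ℕ => ((1 - β ^ (n+1)) / ((n+1).factorial : ℝ)) * μ ^ n) := by
  refine Summable.of_nonneg_of_le (fun n => ?_) (fun n => ?_)
    (Real.summable_pow_div_factorial μ)
  · have : β ^ (n+1) ≤ 1 := pow_le_one₀ hβ0 hβ1
    have h2 : (0:ℝ) < ((n+1).factorial : ℝ) := by positivity
    have h3 := pow_nonneg hμ n
    have h4 : (0:ℝ) ≤ 1 - β ^ (n+1) := by linarith
    positivity
  · have h1 : β ^ (n+1) ≥ 0 := pow_nonneg hβ0 _
    have h2 : ((n.factorial : ℝ)) ≤ ((n+1).factorial : ℝ) := by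
      exact_mod_cast Nat.factorial_le (Nat.le_succ n)
    have h3 : (0:ℝ) < (n.factorial : ℝ) := by positivity
    have h4 : (0:ℝ) < ((n+1).factorial : ℝ) := by positivity
    have h5 : (1 - β ^ (n+1)) / ((n+1).factorial : ℝ) ≤ 1 / (n.factorial : ℝ) := by
      have h6 : 1 - β ^ (n+1) ≤ 1 := by linarith
      calc (1 - β ^ (n+1)) / ((n+1).factorial : ℝ) ≤ 1 / ((n+1).factorial : ℝ) :=
            by gcongr
        _ ≤ 1 / (n.factorial : ℝ) := by
            apply one_div_le_one_div_of_le h3 h2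
    calc ((1 - β ^ (n+1)) / ((n+1).factorial : ℝ)) * μ ^ n
        ≤ (1 / (n.factorial : ℝ)) * μ ^ n := by
          exact mul_le_mul_of_nonneg_right h5 (pow_nonneg hμ n)
      _ = μ ^ n / (n.factorial : ℝ) := by ring

lemma exp_tsum (x : ℝ) : Real.exp x = ∑' n : ℕ, x ^ n / (n.factorial : ℝ) := by
  rw [Real.exp_eq_exp_ℝ, NormedSpace.exp_eq_tsum_div]

lemma exp_sub_exp (β : ℝ) (μ : ℝ) :
    Real.exp μ - Real.exp (β * μ)
      = ∑' n : ℕ, ((1 - β ^ (n+1)) / ((n+1).factorial : ℝ)) * μ ^ (n+1) := by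
  have h1 : Summable (fun n : ℕ => μ ^ n / (n.factorial : ℝ)) :=
    Real.summable_pow_div_factorial μ
  have h2 : Summable (fun n : ℕ => (β * μ) ^ n / (n.factorial : ℝ)) :=
    Real.summable_pow_div_factorial _
  have key : Real.exp μ - Real.exp (β * μ)
      = ∑' n : ℕ, ((1 - β ^ n) / (n.factorial : ℝ)) * μ ^ n := by
    rw [exp_tsum, exp_tsum, ← Summable.tsum_sub h1 h2]
    congr 1; funext n; rw [mul_pow]; ring
  rw [key, Summable.tsum_eq_zero_add]
  · simp
  · have h3 : Summable (fun n : ℕ => ((1 - β ^ n) / (n.factorial : ℝ)) * μ ^ n) := by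
      have := h1.sub h2
      refine this.congr (fun n => ?_)
      rw [mul_pow]; ring
    exact h3

lemma serf_spec {β μ : ℝ} (hμ : 0 < μ) :
    serf β μ = (Real.exp μ - Real.exp (β * μ)) / μ := by
  rw [eq_div_iff hμ.ne', serf, ← tsum_mul_right, exp_sub_exp]
  congr 1; funext n; rw [pow_succ]; ring

lemma serf_coeff_nonneg {β : ℝ} (hβ0 : 0 ≤ β) (hβ1 : β ≤ 1) (n : ℕ) :
    0 ≤ (1 - β ^ (n+1)) / ((n+1).factorial : ℝ) := by
  have h1 : β ^ (n+1) ≤ 1 := pow_le_one₀ hβ0 hβ1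
  have h4 : (0:ℝ) < ((n+1).factorial : ℝ) := by positivity
  have : (0:ℝ) ≤ 1 - β ^ (n+1) := by linarith
  positivity

lemma serf_mono {β : ℝ} (hβ0 : 0 ≤ β) (hβ1 : β ≤ 1) {x y : ℝ} (hx : 0 ≤ x) (hxy : x ≤ y) :
    serf β x ≤ serf β y := by
  refine (serf_summable hβ0 hβ1 hx).tsum_le_tsum (fun n => ?_)
    (serf_summable hβ0 hβ1 (hx.trans hxy))
  exact mul_le_mul_of_nonneg_left (pow_le_pow_left₀ hx hxy n) (serf_coeff_nonneg hβ0 hβ1 n)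

lemma serf_convex {β : ℝ} (hβ0 : 0 ≤ β) (hβ1 : β ≤ 1) :
    ConvexOn ℝ (Set.Ici (0:ℝ)) (serf β) := by
  refine ⟨convex_Ici 0, fun x hx y hy a b ha hb hab => ?_⟩
  simp only [smul_eq_mul]
  have hx' : (0:ℝ) ≤ x := hx
  have hy' : (0:ℝ) ≤ y := hy
  have hz : (0:ℝ) ≤ a * x + b * y := by positivity
  have hsx := serf_summable hβ0 hβ1 hx'
  have hsy := serf_summable hβ0 hβ1 hy'
  have hsz := serf_summable hβ0 hβ1 hz
  unfold serf
  rw [← tsum_mul_left, ← tsum_mul_left, ← Summable.tsum_add (hsx.mul_left a) (hsy.mul_left b)]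
  refine hsz.tsum_le_tsum (fun n => ?_) ((hsx.mul_left a).add (hsy.mul_left b))
  have hpow := (convexOn_pow n).2 hx hy ha hb hab
  simp only [smul_eq_mul] at hpow
  have hc := serf_coeff_nonneg hβ0 hβ1 n
  calc (1 - β ^ (n+1)) / ((n+1).factorial : ℝ) * (a * x + b * y) ^ n
      ≤ (1 - β ^ (n+1)) / ((n+1).factorial : ℝ) * (a * x ^ n + b * y ^ n) :=
        mul_le_mul_of_nonneg_left hpow hc
    _ = a * ((1 - β ^ (n+1)) / ((n+1).factorial : ℝ) * x ^ n)
        + b * ((1 - β ^ (n+1)) / ((n+1).factorial : ℝ) * y ^ n) := by ring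

section hats
variable {α s p₀ : ℝ}

lemma bHat_eq {μ : ℝ} (hμ : 0 < μ) :
    bHat α s p₀ μ = s * serf (1-α) μ + (p₀/2) * serf 0 μ := by
  rw [serf_spec hμ, serf_spec hμ, bHat]
  have h1 : Real.exp (-α * μ) * Real.exp μ = Real.exp ((1-α) * μ) := by
    rw [← Real.exp_add]; ring_nf
  have h2 : Real.exp (0 * μ) = 1 := by rw [zero_mul, Real.exp_zero]
  rw [h2]
  have hnum : s * (1 - Real.exp (-α * μ)) * Real.exp μ + (p₀/2) * (Real.exp μ - 1)
      = s * (Real.exp μ - Real.exp ((1-α)*μ)) + (p₀/2) * (Real.exp μ - 1) := by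
    linear_combination (-s) * h1
  rw [hnum, add_div, mul_div_assoc, mul_div_assoc]

noncomputable def gg (α s p₀ : ℝ) (μ : ℝ) : ℝ :=
  (1-s) * serf (1-α) μ + (p₀/2) * serf 0 μ

lemma cHat_eq {μ₁ μ₂ : ℝ} (hμ₁ : 0 < μ₁) (hμ₂ : 0 < μ₂) (h12 : μ₁ ≠ μ₂) :
    cHat α s p₀ μ₁ μ₂ = (μ₂ * gg α s p₀ μ₁ - μ₁ * gg α s p₀ μ₂) / (μ₂ - μ₁) := by
  rw [cHat, gg, gg, serf_spec hμ₁, serf_spec hμ₂, serf_spec hμ₁, serf_spec hμ₂]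
  have h1 : Real.exp (-α * μ₁) * Real.exp μ₁ = Real.exp ((1-α) * μ₁) := by
    rw [← Real.exp_add]; ring_nf
  have h2 : Real.exp (-α * μ₂) * Real.exp μ₂ = Real.exp ((1-α) * μ₂) := by
    rw [← Real.exp_add]; ring_nf
  have h3 : Real.exp (-μ₁) * Real.exp μ₁ = 1 := by rw [← Real.exp_add]; simp
  have h4 : Real.exp (-μ₂) * Real.exp μ₂ = 1 := by rw [← Real.exp_add]; simp
  have h5 : Real.exp (0 * μ₁) = 1 := by rw [zero_mul, Real.exp_zero]
  have h6 : Real.exp (0 * μ₂) = 1 := by rw [zero_mul, Real.exp_zero]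
  rw [h5, h6]
  have hnum : μ₂ ^ 2 * Real.exp μ₁ * ((1 - s) * (1 - Real.exp (-α * μ₁))
        + (p₀ / 2) * (1 - Real.exp (-μ₁)))
      - μ₁ ^ 2 * Real.exp μ₂ * ((1 - s) * (1 - Real.exp (-α * μ₂))
        + (p₀ / 2) * (1 - Real.exp (-μ₂)))
      = μ₂ ^ 2 * ((1-s) * (Real.exp μ₁ - Real.exp ((1-α)*μ₁))
          + (p₀/2) * (Real.exp μ₁ - 1))
        - μ₁ ^ 2 * ((1-s) * (Real.exp μ₂ - Real.exp ((1-α)*μ₂))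
          + (p₀/2) * (Real.exp μ₂ - 1)) := by
    linear_combination (-(μ₂^2*(1-s))) * h1 + (μ₁^2*(1-s)) * h2
      + (-(μ₂^2*(p₀/2))) * h3 + (μ₁^2*(p₀/2)) * h4
  rw [hnum]
  have hne : μ₂ - μ₁ ≠ 0 := sub_ne_zero.mpr (Ne.symm h12)
  field_simp

end hats

section mono
variable {α s p₀ : ℝ} (hα : 0 < α) (hα1 : α ≤ 1) (hs0 : 0 ≤ s) (hs1 : s ≤ 1) (hp : 0 ≤ p₀)


include hα hα1 hs1 hp in
lemma gg_convex : ConvexOn ℝ (Set.Ici (0:ℝ)) (gg α s p₀) := by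
  have h1 := (serf_convex (β := 1 - α) (by linarith) (by linarith)).smul
    (c := 1 - s) (by linarith)
  have h2 := (serf_convex (β := (0:ℝ)) le_rfl zero_le_one).smul (c := p₀/2) (by linarith)
  have := h1.add h2
  exact this

include hα hα1 hs1 hp in
lemma gg_mono {x y : ℝ} (hx : 0 ≤ x) (hxy : x ≤ y) : gg α s p₀ x ≤ gg α s p₀ y := by
  have h1 := serf_mono (β := 1 - α) (by linarith) (by linarith) hx hxy
  have h2 := serf_mono (β := (0:ℝ)) le_rfl zero_le_one hx hxy
  have hc1 : (0:ℝ) ≤ 1 - s := by linarith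
  have hc2 : (0:ℝ) ≤ p₀/2 := by linarith
  unfold gg
  have := mul_le_mul_of_nonneg_left h1 hc1
  have := mul_le_mul_of_nonneg_left h2 hc2
  linarith

include hα hα1 hs0 hp in
lemma bHat_mono {x y : ℝ} (hx : 0 < x) (hxy : x ≤ y) :
    bHat α s p₀ x ≤ bHat α s p₀ y := by
  rw [bHat_eq hx, bHat_eq (hx.trans_le hxy)]
  have h1 := serf_mono (β := 1 - α) (by linarith) (by linarith) hx.le hxy
  have h2 := serf_mono (β := (0:ℝ)) le_rfl zero_le_one hx.le hxy
  have hc2 : (0:ℝ) ≤ p₀/2 := by linarith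
  have := mul_le_mul_of_nonneg_left h1 hs0
  have := mul_le_mul_of_nonneg_left h2 hc2
  linarith

lemma chord_eq_left {G : ℝ → ℝ} {a x : ℝ} (hax : a ≠ x) :
    (x * G a - a * G x) / (x - a) = G a - a * ((G x - G a) / (x - a)) := by
  have h : x - a ≠ 0 := sub_ne_zero.mpr (Ne.symm hax)
  field_simp
  ring

include hα hα1 hs1 hp in
lemma cHat_anti {μ₁ μ₂ ν₁ ν₂ : ℝ} (hμ₁ : 0 < μ₁) (h₁ : μ₁ ≤ ν₁) (h₂ : μ₂ ≤ ν₂)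
    (h₁₂ : μ₁ < μ₂) (hν : ν₁ < ν₂) :
    cHat α s p₀ ν₁ ν₂ ≤ cHat α s p₀ μ₁ μ₂ := by
  set G := gg α s p₀ with hG
  have hcv := gg_convex hα hα1 hs1 hp
  have hν₁ : 0 < ν₁ := hμ₁.trans_le h₁
  have hν₂ : 0 < ν₂ := hν₁.trans hν
  have hμ₂ : 0 < μ₂ := hμ₁.trans h₁₂
  have hμ₁ν₂ : μ₁ < ν₂ := h₁₂.trans_le h₂
  -- step 1 : cHat μ₁ ν₂ ≤ cHat μ₁ μ₂
  have step1 : cHat α s p₀ μ₁ ν₂ ≤ cHat α s p₀ μ₁ μ₂ := by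
    rw [cHat_eq hμ₁ hμ₂ h₁₂.ne, cHat_eq hμ₁ hν₂ hμ₁ν₂.ne,
      chord_eq_left h₁₂.ne, chord_eq_left hμ₁ν₂.ne]
    have hsec := hcv.secant_mono (a := μ₁) (x := μ₂) (y := ν₂)
      (Set.mem_Ici.mpr hμ₁.le) (Set.mem_Ici.mpr hμ₂.le) (Set.mem_Ici.mpr hν₂.le)
      h₁₂.ne' hμ₁ν₂.ne' h₂
    have := mul_le_mul_of_nonneg_left hsec hμ₁.le
    linarith
  -- step 2 : cHat ν₁ ν₂ ≤ cHat μ₁ ν₂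
  have step2 : cHat α s p₀ ν₁ ν₂ ≤ cHat α s p₀ μ₁ ν₂ := by
    rw [cHat_eq hμ₁ hν₂ hμ₁ν₂.ne, cHat_eq hν₁ hν₂ hν.ne]
    have e1 : (ν₂ * G μ₁ - μ₁ * G ν₂) / (ν₂ - μ₁)
        = G ν₂ - ν₂ * ((G μ₁ - G ν₂) / (μ₁ - ν₂)) := by
      have h : ν₂ - μ₁ ≠ 0 := sub_ne_zero.mpr hμ₁ν₂.ne'
      have h' : μ₁ - ν₂ ≠ 0 := sub_ne_zero.mpr hμ₁ν₂.ne
      field_simp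
      ring
    have e2 : (ν₂ * G ν₁ - ν₁ * G ν₂) / (ν₂ - ν₁)
        = G ν₂ - ν₂ * ((G ν₁ - G ν₂) / (ν₁ - ν₂)) := by
      have h : ν₂ - ν₁ ≠ 0 := sub_ne_zero.mpr hν.ne'
      have h' : ν₁ - ν₂ ≠ 0 := sub_ne_zero.mpr hν.ne
      field_simp
      ring
    rw [e1, e2]
    have hsec := hcv.secant_mono (a := ν₂) (x := μ₁) (y := ν₁)
      (Set.mem_Ici.mpr hν₂.le) (Set.mem_Ici.mpr hμ₁.le) (Set.mem_Ici.mpr hν₁.le)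
      hμ₁ν₂.ne hν.ne h₁
    have := mul_le_mul_of_nonneg_left hsec hν₂.le
    linarith
  exact step2.trans step1

include hs0 in
lemma bHat_pos (hp' : 0 < p₀) (hα' : 0 < α) {μ : ℝ} (hμ : 0 < μ) : 0 < bHat α s p₀ μ := by
  rw [bHat]
  apply div_pos _ hμ
  have h1 : Real.exp (-α * μ) ≤ 1 := Real.exp_le_one_iff.mpr (by nlinarith)
  have h2 : 1 < Real.exp μ := Real.one_lt_exp_iff.mpr hμ
  have h3 : 0 ≤ s * (1 - Real.exp (-α * μ)) * Real.exp μ := by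
    have h4 : 0 ≤ 1 - Real.exp (-α * μ) := by linarith
    have h5 := (Real.exp_pos μ).le
    positivity
  nlinarith

end mono

noncomputable def psi (e c : ℝ) : ℝ :=
  (c + e) * Real.log 2 + e * Real.log e + c * Real.log c - (c + e) * Real.log (c + e)

lemma key_ent {e c : ℝ} (he : 0 < e) (hc : 0 < c) :
    (c + e) * (1 - binEnt (e / (c + e))) = psi e c / Real.log 2 := by
  have hN : 0 < c + e := by linarith
  have hl2 : Real.log 2 ≠ 0 := Real.log_ne_zero_of_pos_of_ne_one two_pos (by norm_num)
  have h1 : 1 - e / (c + e) = c / (c + e) := by field_simp; ring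
  rw [binEnt, h1, psi]
  rw [Real.logb, Real.logb, Real.log_div he.ne' hN.ne', Real.log_div hc.ne' hN.ne']
  field_simp
  ring

lemma psi_hasDeriv_c (e : ℝ) {c : ℝ} (hc : 0 < c) (he : 0 < e) :
    HasDerivAt (fun c => psi e c) (Real.log 2 + Real.log c - Real.log (c + e)) c := by
  have hN : c + e ≠ 0 := by positivity
  have h1 : HasDerivAt (fun c : ℝ => (c + e) * Real.log 2) (Real.log 2) c := by
    simpa using ((hasDerivAt_id c).add_const e).mul_const (Real.log 2)
  have h2 : HasDerivAt (fun c : ℝ => c * Real.log c) (Real.log c + 1) c :=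
    Real.hasDerivAt_mul_log hc.ne'
  have h3 : HasDerivAt (fun c : ℝ => (c + e) * Real.log (c + e))
      ((Real.log (c + e) + 1) * 1) c :=
    by have := (Real.hasDerivAt_mul_log hN).comp c ((hasDerivAt_id c).add_const e); exact this
  have := ((h1.add_const (e * Real.log e)).add h2).sub h3
  refine this.congr_deriv ?_
  · ring

lemma psi_hasDeriv_e (c : ℝ) {e : ℝ} (he : 0 < e) (hc : 0 < c) :
    HasDerivAt (fun e => psi e c) (Real.log 2 + Real.log e - Real.log (c + e)) e := by
  have hN : c + e ≠ 0 := by positivity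
  have h1 : HasDerivAt (fun e : ℝ => (c + e) * Real.log 2) (Real.log 2) e := by
    simpa using ((hasDerivAt_id e).const_add c).mul_const (Real.log 2)
  have h2 : HasDerivAt (fun e : ℝ => e * Real.log e) (Real.log e + 1) e :=
    Real.hasDerivAt_mul_log he.ne'
  have h3 : HasDerivAt (fun e : ℝ => (c + e) * Real.log (c + e))
      ((Real.log (c + e) + 1) * 1) e :=
    (Real.hasDerivAt_mul_log hN).comp e ((hasDerivAt_id e).const_add c)
  have := ((h1.add h2).add_const (c * Real.log c)).sub h3
  refine this.congr_deriv ?_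
  · ring

lemma psi_mono_c {e c₁ c₂ : ℝ} (he : 0 < e) (hc1 : e ≤ c₁) (hc2 : c₁ ≤ c₂) :
    psi e c₁ ≤ psi e c₂ := by
  have hc1' : 0 < c₁ := he.trans_le hc1
  have key : ∀ c ∈ Set.Icc c₁ c₂, HasDerivAt (fun c => psi e c)
      (Real.log 2 + Real.log c - Real.log (c + e)) c :=
    fun c hc => psi_hasDeriv_c e (hc1'.trans_le hc.1) he
  have hmono : MonotoneOn (fun c => psi e c) (Set.Icc c₁ c₂) := by
    apply monotoneOn_of_deriv_nonneg (convex_Icc c₁ c₂)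
    · exact fun c hc => (key c hc).differentiableAt.continuousAt.continuousWithinAt
    · intro c hc
      rw [interior_Icc] at hc
      exact ((key c ⟨hc.1.le, hc.2.le⟩).differentiableAt).differentiableWithinAt
    · intro c hc
      rw [interior_Icc] at hc
      have hcpos : 0 < c := hc1'.trans hc.1
      rw [(key c ⟨hc.1.le, hc.2.le⟩).deriv]
      have hle : c + e ≤ 2 * c := by nlinarith [hc.1, hc1]
      have := Real.log_le_log (by positivity) hle
      rw [Real.log_mul (by norm_num) hcpos.ne'] at this
      linarith
  exact hmono (Set.left_mem_Icc.mpr hc2) (Set.right_mem_Icc.mpr hc2) hc2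

lemma psi_anti_e {c e₂ e₁ : ℝ} (he2 : 0 < e₂) (he : e₂ ≤ e₁) (hc : e₁ ≤ c) :
    psi e₁ c ≤ psi e₂ c := by
  have hc' : 0 < c := lt_of_lt_of_le (he2.trans_le he) hc
  have key : ∀ e ∈ Set.Icc e₂ e₁, HasDerivAt (fun e => psi e c)
      (Real.log 2 + Real.log e - Real.log (c + e)) e :=
    fun e heI => psi_hasDeriv_e c (he2.trans_le heI.1) hc'
  have hanti : AntitoneOn (fun e => psi e c) (Set.Icc e₂ e₁) := by
    apply antitoneOn_of_deriv_nonpos (convex_Icc e₂ e₁)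
    · exact fun e heI => (key e heI).differentiableAt.continuousAt.continuousWithinAt
    · intro e heI
      rw [interior_Icc] at heI
      exact ((key e ⟨heI.1.le, heI.2.le⟩).differentiableAt).differentiableWithinAt
    · intro e heI
      rw [interior_Icc] at heI
      have hepos : 0 < e := he2.trans heI.1
      rw [(key e ⟨heI.1.le, heI.2.le⟩).deriv]
      have hle : 2 * e ≤ c + e := by nlinarith [heI.2, hc]
      have := Real.log_le_log (by positivity) hle
      rw [Real.log_mul (by norm_num) hepos.ne'] at this
      linarith
  exact hanti (Set.left_mem_Icc.mpr he) (Set.right_mem_Icc.mpr he) he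

theorem stmt0 (α s p₀ μ₁ μ₂ ν₁ ν₂ : ℝ)
    (hα : 0 < α) (hα1 : α ≤ 1) (hs0 : 0 ≤ s) (hs : s < 1 / 2) (hp : 0 < p₀)
    (hμ₁ : 0 < μ₁) (h₁ : μ₁ ≤ ν₁) (h₂ : μ₂ ≤ ν₂) (h₁₂ : μ₁ < μ₂) (hν : ν₁ < ν₂)
    (hpos : 0 < cHat α s p₀ ν₁ ν₂ + bHat α s p₀ ν₁)
    (hratio : bHat α s p₀ ν₁ / (cHat α s p₀ ν₁ ν₂ + bHat α s p₀ ν₁) < 1 / 2) :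
    (cHat α s p₀ ν₁ ν₂ + bHat α s p₀ ν₁) *
        (1 - binEnt (bHat α s p₀ ν₁ / (cHat α s p₀ ν₁ ν₂ + bHat α s p₀ ν₁)))
      ≤ (cHat α s p₀ μ₁ μ₂ + bHat α s p₀ μ₁) *
        (1 - binEnt (bHat α s p₀ μ₁ / (cHat α s p₀ μ₁ μ₂ + bHat α s p₀ μ₁))) := by
  have hs1 : s ≤ 1 := by linarith
  have hp' : 0 ≤ p₀ := hp.le
  set e₁ := bHat α s p₀ ν₁ with he₁def
  set e₂ := bHat α s p₀ μ₁ with he₂def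
  set c₁ := cHat α s p₀ ν₁ ν₂ with hc₁def
  set c₂ := cHat α s p₀ μ₁ μ₂ with hc₂def
  have hν₁ : 0 < ν₁ := hμ₁.trans_le h₁
  have he₂ : 0 < e₂ := bHat_pos hs0 hp hα hμ₁
  have he₁ : 0 < e₁ := bHat_pos hs0 hp hα hν₁
  have he₂₁ : e₂ ≤ e₁ := bHat_mono hα hα1 hs0 hp' hμ₁ h₁
  have hec : e₁ < c₁ := by
    have := (div_lt_iff₀ hpos).mp hratio
    linarith
  have hc₁ : 0 < c₁ := he₁.trans hec
  have hcc : c₁ ≤ c₂ := cHat_anti hα hα1 hs1 hp' hμ₁ h₁ h₂ h₁₂ hν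
  have hc₂ : 0 < c₂ := hc₁.trans_le hcc
  rw [key_ent he₁ hc₁, key_ent he₂ hc₂]
  have step1 : psi e₁ c₁ ≤ psi e₁ c₂ := psi_mono_c he₁ hec.le hcc
  have step2 : psi e₁ c₂ ≤ psi e₂ c₂ := psi_anti_e he₂ he₂₁ (hec.le.trans hcc)
  have hl2 : 0 < Real.log 2 := Real.log_pos one_lt_two
  gcongr
  linarith
end

section
/- Fix a signal intensity μ_s > 0 and let 0 < μ₁ < μ₂ < μ_s < μ₃ < μ₄. Assume â(μ_s,μ₄) > 0 and b̂(μ_s)/â(μ_s,μ₄) < 1/2. Then the conventional asymptotic key generation rate R̃ satisfies the chain R̃(μ_s,μ₁) ≥ R̃(μ_s,μ₂) ≥ R̃(μ_s,μ₃) ≥ R̃(μ_s,μ₄); i.e., for fixed μ_s the rate R̃(μ_s,μ_d) is monotonically decreasing in the decoy intensity μ_d. -/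
/-- Estimate `â(μ₁,μ₂)` of the detection rate of the single photon pulse. -/
noncomputable def aHat (α p₀ μ₁ μ₂ : ℝ) : ℝ :=
  (μ₂ ^ 2 * Real.exp μ₁ * ((1 - Real.exp (-α * μ₁)) + p₀ * (1 - Real.exp (-μ₁)))
    - μ₁ ^ 2 * Real.exp μ₂ * ((1 - Real.exp (-α * μ₂)) + p₀ * (1 - Real.exp (-μ₂))))
  / (μ₁ * μ₂ * (μ₂ - μ₁))

/-- Detection rate `p₊(μ)` of a pulse of intensity `μ`. -/
noncomputable def pPlus (α p₀ μ : ℝ) : ℝ := 1 - Real.exp (-α * μ) + p₀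

/-- Error rate `e₊(μ)` of a pulse of intensity `μ`. -/
noncomputable def ePlus (α s p₀ μ : ℝ) : ℝ :=
  (s * (1 - Real.exp (-α * μ)) + p₀ / 2) / pPlus α p₀ μ

/-- The conventional asymptotic key generation rate `R̃(μ_s, μ_d)`. -/
noncomputable def Rtilde (α s p₀ η μs μd : ℝ) : ℝ :=
  if μd < μs then
    μs * Real.exp (-μs) * aHat α p₀ μd μs *
        (1 - binEnt (bHat α s p₀ μd / aHat α p₀ μd μs))
      + Real.exp (-μs) * p₀ - pPlus α p₀ μs * η * binEnt (ePlus α s p₀ μs)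
  else
    μs * Real.exp (-μs) * aHat α p₀ μs μd *
        (1 - binEnt (bHat α s p₀ μs / aHat α p₀ μs μd))
      + Real.exp (-μs) * p₀ - pPlus α p₀ μs * η * binEnt (ePlus α s p₀ μs)

open Real Set

/-! ### Auxiliary functions -/

/-- `ρ(u) = e^u (u² - 2u + 2)`, the second derivative of `x ↦ x² e^{c/x}` evaluated at `u = c/x`. -/
noncomputable def rhoF (u : ℝ) : ℝ := Real.exp u * (u ^ 2 - 2 * u + 2)

/-- `H(x) = g(1/x)·x²` where `g(μ) = e^μ((1-e^{-αμ}) + p₀(1-e^{-μ}))`;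
its secant slopes give `aHat`. -/
noncomputable def Hf (α p₀ x : ℝ) : ℝ :=
  (Real.exp x⁻¹ - Real.exp ((1 - α) * x⁻¹) + p₀ * Real.exp x⁻¹ - p₀) * x ^ 2

/-- The derivative of `Hf`. -/
noncomputable def Hf' (α p₀ x : ℝ) : ℝ :=
  Real.exp x⁻¹ * (2 * x - 1) - Real.exp ((1 - α) * x⁻¹) * (2 * x - (1 - α))
    + p₀ * (Real.exp x⁻¹ * (2 * x - 1)) - 2 * p₀ * x

/-- `B(μ)`, whose secant slope through `0` gives `bHat`. -/
noncomputable def Bf (α s p₀ μ : ℝ) : ℝ :=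
  s * (Real.exp μ - Real.exp ((1 - α) * μ)) + p₀ / 2 * (Real.exp μ - 1)

lemma exp_neg_mul_eq (α μ : ℝ) : Real.exp (-α * μ) = Real.exp ((1 - α) * μ) / Real.exp μ := by
  rw [← Real.exp_sub]; ring_nf

lemma exp_lin_deriv (c μ : ℝ) :
    HasDerivAt (fun x : ℝ => Real.exp (c * x)) (c * Real.exp (c * μ)) μ := by
  simpa [mul_comm, Function.comp_def] using ((Real.hasDerivAt_exp (c * μ)).comp μ ((hasDerivAt_id μ).const_mul c))

lemma exp_inv_deriv {c x : ℝ} (hx : x ≠ 0) :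
    HasDerivAt (fun y : ℝ => Real.exp (c * y⁻¹)) (Real.exp (c * x⁻¹) * (c * -(x ^ 2)⁻¹)) x :=
  ((hasDerivAt_inv hx).const_mul c).exp

lemma rhoF_mono : Monotone rhoF := by
  have hd : ∀ u : ℝ, HasDerivAt rhoF (Real.exp u * u ^ 2) u := by
    intro u
    have h := ((Real.hasDerivAt_exp u).mul (((hasDerivAt_pow 2 u).sub
      ((hasDerivAt_id u).const_mul 2)).add_const 2))
    refine h.congr_deriv ?_
    simp only [id, Pi.sub_apply]
    ring
  have hdiff : Differentiable ℝ rhoF := fun u => (hd u).differentiableAt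
  apply monotone_of_deriv_nonneg hdiff
  intro u
  rw [(hd u).deriv]
  positivity

lemma Hf_deriv {α p₀ x : ℝ} (hx : x ≠ 0) : HasDerivAt (Hf α p₀) (Hf' α p₀ x) x := by
  have e1 : HasDerivAt (fun y : ℝ => Real.exp y⁻¹) (Real.exp x⁻¹ * -(x ^ 2)⁻¹) x := by
    simpa using exp_inv_deriv (c := 1) hx
  have e2 := exp_inv_deriv (c := 1 - α) hx
  have h := (((e1.sub e2).add (e1.const_mul p₀)).sub_const p₀).mul (hasDerivAt_pow 2 x)
  refine h.congr_deriv ?_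
  rw [Hf']
  simp only [Pi.add_apply, Pi.sub_apply]
  have hx2 : (x:ℝ) ^ 2 ≠ 0 := pow_ne_zero 2 hx
  field_simp
  ring

lemma Hf'_deriv {α p₀ x : ℝ} (hx : x ≠ 0) :
    HasDerivAt (Hf' α p₀)
      (rhoF x⁻¹ - rhoF ((1 - α) * x⁻¹) + p₀ * (rhoF x⁻¹ - 2)) x := by
  have e1 : HasDerivAt (fun y : ℝ => Real.exp y⁻¹) (Real.exp x⁻¹ * -(x ^ 2)⁻¹) x := by
    simpa using exp_inv_deriv (c := 1) hx
  have e2 := exp_inv_deriv (c := 1 - α) hx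
  have l1 : HasDerivAt (fun y : ℝ => 2 * y - 1) 2 x := by
    simpa using ((hasDerivAt_id x).const_mul 2).sub_const 1
  have l2 : HasDerivAt (fun y : ℝ => 2 * y - (1 - α)) 2 x := by
    simpa using ((hasDerivAt_id x).const_mul 2).sub_const (1 - α)
  have h := (((e1.mul l1).sub (e2.mul l2)).add ((e1.mul l1).const_mul p₀)).sub
    (((hasDerivAt_id x).const_mul 2).const_mul p₀)
  refine (h.congr_deriv ?_).congr_of_eventuallyEq (Filter.Eventually.of_forall fun y => ?_)
  · simp only [rhoF]
    have hx2 : (x:ℝ) ^ 2 ≠ 0 := pow_ne_zero 2 hx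
    field_simp
    ring
  · rw [Hf']; simp only [id, Pi.add_apply, Pi.sub_apply, Pi.mul_apply]; ring

lemma Hf_convex {α p₀ : ℝ} (hα : 0 < α) (hα1 : α ≤ 1) (hp : 0 ≤ p₀) :
    ConvexOn ℝ (Ioi (0:ℝ)) (Hf α p₀) := by
  apply convexOn_of_hasDerivWithinAt2_nonneg (convex_Ioi 0)
    (f' := Hf' α p₀)
    (f'' := fun x => rhoF x⁻¹ - rhoF ((1 - α) * x⁻¹) + p₀ * (rhoF x⁻¹ - 2))
  · intro x hx
    exact (Hf_deriv (ne_of_gt hx)).continuousAt.continuousWithinAt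
  · intro x hx
    rw [interior_Ioi] at hx
    exact (Hf_deriv (ne_of_gt hx)).hasDerivWithinAt
  · intro x hx
    rw [interior_Ioi] at hx
    exact (Hf'_deriv (ne_of_gt hx)).hasDerivWithinAt
  · intro x hx
    rw [interior_Ioi] at hx
    have hxi : 0 < x⁻¹ := inv_pos.2 hx
    have h1 : (1 - α) * x⁻¹ ≤ x⁻¹ := by nlinarith
    have h0 : 0 ≤ (1 - α) * x⁻¹ := mul_nonneg (by linarith) hxi.le
    have m1 := rhoF_mono h1
    have r0 : rhoF 0 = 2 := by simp [rhoF]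
    have m3 := rhoF_mono (show (0:ℝ) ≤ x⁻¹ by linarith)
    rw [r0] at m3
    nlinarith

lemma Bf_deriv {α s p₀ μ : ℝ} :
    HasDerivAt (Bf α s p₀)
      (s * (Real.exp μ - (1 - α) * Real.exp ((1 - α) * μ)) + p₀ / 2 * Real.exp μ) μ := by
  have h1 := exp_lin_deriv (1 - α) μ
  have h2 := ((((Real.hasDerivAt_exp μ).sub h1).const_mul s).add
    (((Real.hasDerivAt_exp μ).sub_const 1).const_mul (p₀ / 2)))
  exact h2

lemma Bf_convex {α s p₀ : ℝ} (hα : 0 < α) (hα1 : α ≤ 1) (hs0 : 0 ≤ s) (hp : 0 ≤ p₀) :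
    ConvexOn ℝ (Ici (0:ℝ)) (Bf α s p₀) := by
  apply convexOn_of_hasDerivWithinAt2_nonneg (convex_Ici 0)
    (f' := fun μ => s * (Real.exp μ - (1 - α) * Real.exp ((1 - α) * μ)) + p₀ / 2 * Real.exp μ)
    (f'' := fun μ => s * (Real.exp μ - (1 - α) ^ 2 * Real.exp ((1 - α) * μ)) + p₀ / 2 * Real.exp μ)
  · exact fun μ _ => Bf_deriv.continuousAt.continuousWithinAt
  · exact fun μ _ => Bf_deriv.hasDerivWithinAt
  · intro μ _
    apply HasDerivAt.hasDerivWithinAt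
    have h1 := exp_lin_deriv (1 - α) μ
    have h2 := ((((Real.hasDerivAt_exp μ).sub (h1.const_mul (1 - α))).const_mul s).add
      ((Real.hasDerivAt_exp μ).const_mul (p₀ / 2)))
    exact h2.congr_deriv (by ring)
  · intro μ hμ
    rw [interior_Ici] at hμ
    have hμ0 : (0:ℝ) ≤ μ := le_of_lt hμ
    have hb : (1 - α) * μ ≤ μ := by nlinarith
    have h1 : Real.exp ((1 - α) * μ) ≤ Real.exp μ := Real.exp_le_exp.2 hb
    have h2 : (1 - α) ^ 2 * Real.exp ((1 - α) * μ) ≤ Real.exp μ := by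
      have : (1 - α) ^ 2 ≤ 1 := by nlinarith
      nlinarith [Real.exp_pos ((1 - α) * μ)]
    have := Real.exp_pos μ
    nlinarith

lemma aHat_eq_slope {α p₀ μ₁ μ₂ : ℝ} (h1 : 0 < μ₁) (h2 : 0 < μ₂) (hne : μ₁ ≠ μ₂) :
    aHat α p₀ μ₁ μ₂ = (Hf α p₀ μ₁⁻¹ - Hf α p₀ μ₂⁻¹) / (μ₁⁻¹ - μ₂⁻¹) := by
  rw [aHat, Hf, Hf, inv_inv, inv_inv, exp_neg_mul_eq α μ₁, exp_neg_mul_eq α μ₂,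
    Real.exp_neg μ₁, Real.exp_neg μ₂]
  have e1 := Real.exp_pos μ₁
  have e2 := Real.exp_pos μ₂
  have hsub : μ₁⁻¹ - μ₂⁻¹ ≠ 0 := by
    rw [sub_ne_zero]
    exact fun h => hne (by rw [← inv_inv μ₁, h, inv_inv])
  have hd : μ₂ - μ₁ ≠ 0 := sub_ne_zero.2 (Ne.symm hne)
  field_simp
  ring

lemma bHat_eq_slope {α s p₀ μ : ℝ} (h : 0 < μ) :
    bHat α s p₀ μ = (Bf α s p₀ μ - Bf α s p₀ 0) / (μ - 0) := by
  rw [bHat, Bf, Bf, exp_neg_mul_eq α μ]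
  have e := Real.exp_pos μ
  field_simp
  simp [h.ne']

lemma bHat_pos_s3 {α s p₀ μ : ℝ} (hα : 0 < α) (hs0 : 0 ≤ s) (hp : 0 < p₀) (h : 0 < μ) :
    0 < bHat α s p₀ μ := by
  rw [bHat]
  apply div_pos _ h
  have h1 : Real.exp (-α * μ) ≤ 1 := by
    rw [show (1:ℝ) = Real.exp 0 by simp]
    exact Real.exp_le_exp.2 (by nlinarith)
  have h2 : 1 < Real.exp μ := by
    rw [show (1:ℝ) = Real.exp 0 by simp]
    exact Real.exp_lt_exp.2 h
  have e3 := Real.exp_pos μ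
  have h4 : 0 ≤ s * (1 - Real.exp (-α * μ)) * Real.exp μ :=
    mul_nonneg (mul_nonneg hs0 (by linarith)) e3.le
  nlinarith

lemma bHat_mono_s3 {α s p₀ μ μ' : ℝ} (hα : 0 < α) (hα1 : α ≤ 1) (hs0 : 0 ≤ s) (hp : 0 < p₀)
    (h : 0 < μ) (h' : μ ≤ μ') : bHat α s p₀ μ ≤ bHat α s p₀ μ' := by
  have h0' : 0 < μ' := lt_of_lt_of_le h h'
  rw [bHat_eq_slope h, bHat_eq_slope h0']
  exact (Bf_convex hα hα1 hs0 hp.le).secant_mono (self_mem_Ici)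
    (mem_Ici.2 h.le) (mem_Ici.2 h0'.le) h.ne' h0'.ne' h'

lemma binEnt_eq (x : ℝ) : binEnt x = Real.binEntropy x / Real.log 2 := by
  rw [binEnt, Real.binEntropy, Real.logb, Real.logb, Real.log_inv, Real.log_inv]
  ring

lemma binEnt_mono {x y : ℝ} (hx : 0 ≤ x) (hxy : x ≤ y) (hy : y ≤ 1/2) :
    binEnt x ≤ binEnt y := by
  rw [binEnt_eq, binEnt_eq]
  have h2 : (0:ℝ) < Real.log 2 := Real.log_pos (by norm_num)
  have hmem1 : x ∈ Icc (0:ℝ) 2⁻¹ := ⟨hx, by norm_num; linarith⟩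
  have hmem2 : y ∈ Icc (0:ℝ) 2⁻¹ := ⟨by linarith, by norm_num; linarith⟩
  have h := Real.binEntropy_strictMonoOn.monotoneOn hmem1 hmem2 hxy
  gcongr

/-- explicit form of `x (1 - binEnt (b/x))`. -/
lemma F_eq {b x : ℝ} (hb : 0 < b) (hx : b < x) :
    x * (1 - binEnt (b / x)) =
      x - (x * Real.log x - b * Real.log b - (x - b) * Real.log (x - b)) / Real.log 2 := by
  have hx0 : 0 < x := lt_trans hb hx
  have hxb : 0 < x - b := by linarith
  rw [binEnt, Real.logb, Real.logb,
    show 1 - b / x = (x - b) / x by field_simp,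
    Real.log_div hb.ne' hx0.ne', Real.log_div hxb.ne' hx0.ne']
  have hl2 : Real.log 2 ≠ 0 := ne_of_gt (Real.log_pos (by norm_num))
  field_simp
  ring

/-- Monotonicity in the first argument of `a ↦ a (1 - h(b/a))`. -/
lemma F_mono_a {b : ℝ} (hb : 0 < b) :
    MonotoneOn (fun x : ℝ => x * (1 - binEnt (b / x))) (Ici (2 * b)) := by
  set G : ℝ → ℝ := fun x =>
    x - (x * Real.log x - b * Real.log b - (x - b) * Real.log (x - b)) / Real.log 2 with hG
  have hl2 : (0:ℝ) < Real.log 2 := Real.log_pos (by norm_num)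
  have hGd : ∀ x ∈ Ioi b, HasDerivAt G
      (1 - (Real.log x - Real.log (x - b)) / Real.log 2) x := by
    intro x hx
    rw [mem_Ioi] at hx
    have hx0 : (0:ℝ) < x := by linarith
    have hxb : (0:ℝ) < x - b := by linarith
    have d1 : HasDerivAt (fun x : ℝ => x * Real.log x) (Real.log x + 1) x :=
      Real.hasDerivAt_mul_log hx0.ne'
    have d2 : HasDerivAt (fun x : ℝ => (x - b) * Real.log (x - b)) (Real.log (x - b) + 1) x := by
      have := (Real.hasDerivAt_mul_log hxb.ne').comp x ((hasDerivAt_id x).sub_const b)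
      simpa [Function.comp_def] using this
    have h := (hasDerivAt_id x).sub
      ((((d1.sub_const (b * Real.log b)).sub d2).div_const (Real.log 2)))
    refine h.congr_deriv ?_
    ring
  have hGm : MonotoneOn G (Ici (2 * b)) := by
    apply monotoneOn_of_deriv_nonneg (convex_Ici _)
    · intro x hx
      have hbx : x ∈ Ioi b := by rw [mem_Ici] at hx; rw [mem_Ioi]; linarith
      exact ((hGd x hbx).continuousAt).continuousWithinAt
    · rw [interior_Ici]
      intro x hx
      have hbx : x ∈ Ioi b := by rw [mem_Ioi] at hx ⊢; linarith
      exact ((hGd x hbx).differentiableAt).differentiableWithinAt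
    · rw [interior_Ici]
      intro x hx
      have hbx : x ∈ Ioi b := by rw [mem_Ioi] at hx ⊢; linarith
      rw [(hGd x hbx).deriv]
      rw [mem_Ioi] at hx
      have hx0 : (0:ℝ) < x := by linarith
      have hxb : (0:ℝ) < x - b := by linarith
      have : Real.log x - Real.log (x - b) ≤ Real.log 2 := by
        rw [← Real.log_div hx0.ne' hxb.ne']
        apply Real.log_le_log (by positivity)
        rw [div_le_iff₀ hxb]
        linarith
      have := div_le_one_of_le₀ this hl2.le
      linarith
  intro x hx y hy hxy
  have hbx : b < x := by rw [mem_Ici] at hx; linarith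
  have hby : b < y := by rw [mem_Ici] at hy; linarith
  dsimp only
  rw [F_eq hb hbx, F_eq hb hby]
  exact hGm hx hy hxy

/-- The key comparison lemma for `F(a,b) = a (1 - h(b/a))`. -/
lemma key_lemma {b b' a a' : ℝ} (hb : 0 < b) (hbb : b ≤ b') (haa : a' ≤ a) (ha' : 0 < a')
    (hr : b' / a' < 1 / 2) :
    a' * (1 - binEnt (b' / a')) ≤ a * (1 - binEnt (b / a)) := by
  have hb' : 0 < b' := lt_of_lt_of_le hb hbb
  have ha : 0 < a := lt_of_lt_of_le ha' haa
  have h2b : 2 * b' < a' := by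
    have := (div_lt_iff₀ ha').1 hr; linarith
  have step1 : a' * (1 - binEnt (b' / a')) ≤ a * (1 - binEnt (b' / a)) :=
    F_mono_a hb' (mem_Ici.2 h2b.le) (mem_Ici.2 (by linarith)) haa
  refine step1.trans ?_
  have hr2 : b' / a ≤ 1 / 2 := by
    rw [div_le_iff₀ ha]
    nlinarith
  have hmono : binEnt (b / a) ≤ binEnt (b' / a) :=
    binEnt_mono (by positivity) (by gcongr) hr2
  nlinarith

theorem stmt3 (α s p₀ η μs μ₁ μ₂ μ₃ μ₄ : ℝ)
    (hα : 0 < α) (hα1 : α ≤ 1) (hs0 : 0 ≤ s) (hs : s < 1 / 2) (hp : 0 < p₀) (hη : 0 ≤ η)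
    (hμ₁ : 0 < μ₁) (h₁₂ : μ₁ < μ₂) (h₂s : μ₂ < μs) (hs₃ : μs < μ₃) (h₃₄ : μ₃ < μ₄)
    (hpos : 0 < aHat α p₀ μs μ₄)
    (hratio : bHat α s p₀ μs / aHat α p₀ μs μ₄ < 1 / 2) :
    Rtilde α s p₀ η μs μ₂ ≤ Rtilde α s p₀ η μs μ₁ ∧
    Rtilde α s p₀ η μs μ₃ ≤ Rtilde α s p₀ η μs μ₂ ∧
    Rtilde α s p₀ η μs μ₄ ≤ Rtilde α s p₀ η μs μ₃ := by
  have hμ₂ : 0 < μ₂ := hμ₁.trans h₁₂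
  have hμs : 0 < μs := hμ₂.trans h₂s
  have hμ₃ : 0 < μ₃ := hμs.trans hs₃
  have hμ₄ : 0 < μ₄ := hμ₃.trans h₃₄
  have hconv := Hf_convex (α := α) (p₀ := p₀) hα hα1 hp.le
  -- inverse ordering
  have hx12 : μ₂⁻¹ < μ₁⁻¹ := by rw [inv_lt_inv₀ hμ₂ hμ₁]; exact h₁₂
  have hx2s : μs⁻¹ < μ₂⁻¹ := by rw [inv_lt_inv₀ hμs hμ₂]; exact h₂s
  have hxs3 : μ₃⁻¹ < μs⁻¹ := by rw [inv_lt_inv₀ hμ₃ hμs]; exact hs₃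
  have hx34 : μ₄⁻¹ < μ₃⁻¹ := by rw [inv_lt_inv₀ hμ₄ hμ₃]; exact h₃₄
  have hi1 : (0:ℝ) < μ₁⁻¹ := inv_pos.2 hμ₁
  have hi2 : (0:ℝ) < μ₂⁻¹ := inv_pos.2 hμ₂
  have his : (0:ℝ) < μs⁻¹ := inv_pos.2 hμs
  have hi3 : (0:ℝ) < μ₃⁻¹ := inv_pos.2 hμ₃
  have hi4 : (0:ℝ) < μ₄⁻¹ := inv_pos.2 hμ₄
  -- ordering of aHat values
  have ha21 : aHat α p₀ μ₂ μs ≤ aHat α p₀ μ₁ μs := by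
    rw [aHat_eq_slope hμ₂ hμs (ne_of_lt h₂s), aHat_eq_slope hμ₁ hμs (ne_of_lt (h₁₂.trans h₂s))]
    exact hconv.secant_mono (mem_Ioi.2 his) (mem_Ioi.2 hi2) (mem_Ioi.2 hi1)
      (ne_of_gt hx2s) (ne_of_gt (hx2s.trans hx12)) hx12.le
  have e3 : aHat α p₀ μs μ₃ = (Hf α p₀ μ₃⁻¹ - Hf α p₀ μs⁻¹) / (μ₃⁻¹ - μs⁻¹) := by
    rw [aHat_eq_slope hμs hμ₃ (ne_of_lt hs₃),
      show Hf α p₀ μs⁻¹ - Hf α p₀ μ₃⁻¹ = -(Hf α p₀ μ₃⁻¹ - Hf α p₀ μs⁻¹) by ring,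
      show μs⁻¹ - μ₃⁻¹ = -(μ₃⁻¹ - μs⁻¹) by ring, neg_div_neg_eq]
  have e4 : aHat α p₀ μs μ₄ = (Hf α p₀ μ₄⁻¹ - Hf α p₀ μs⁻¹) / (μ₄⁻¹ - μs⁻¹) := by
    rw [aHat_eq_slope hμs hμ₄ (ne_of_lt (hs₃.trans h₃₄)),
      show Hf α p₀ μs⁻¹ - Hf α p₀ μ₄⁻¹ = -(Hf α p₀ μ₄⁻¹ - Hf α p₀ μs⁻¹) by ring,
      show μs⁻¹ - μ₄⁻¹ = -(μ₄⁻¹ - μs⁻¹) by ring, neg_div_neg_eq]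
  have ha32 : aHat α p₀ μs μ₃ ≤ aHat α p₀ μ₂ μs := by
    rw [e3, aHat_eq_slope hμ₂ hμs (ne_of_lt h₂s)]
    exact hconv.secant_mono (mem_Ioi.2 his) (mem_Ioi.2 hi3) (mem_Ioi.2 hi2)
      (ne_of_lt hxs3) (ne_of_gt hx2s) (hxs3.trans hx2s).le
  have ha43 : aHat α p₀ μs μ₄ ≤ aHat α p₀ μs μ₃ := by
    rw [e3, e4]
    exact hconv.secant_mono (mem_Ioi.2 his) (mem_Ioi.2 hi4) (mem_Ioi.2 hi3)
      (ne_of_lt (hx34.trans hxs3)) (ne_of_lt hxs3) hx34.le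
  have ha3 : 0 < aHat α p₀ μs μ₃ := lt_of_lt_of_le hpos ha43
  have ha2 : 0 < aHat α p₀ μ₂ μs := lt_of_lt_of_le ha3 ha32
  have ha1 : 0 < aHat α p₀ μ₁ μs := lt_of_lt_of_le ha2 ha21
  -- bHat values
  have hb1 : 0 < bHat α s p₀ μ₁ := bHat_pos_s3 hα hs0 hp hμ₁
  have hb12 : bHat α s p₀ μ₁ ≤ bHat α s p₀ μ₂ := bHat_mono_s3 hα hα1 hs0 hp hμ₁ h₁₂.le
  have hb2s : bHat α s p₀ μ₂ ≤ bHat α s p₀ μs := bHat_mono_s3 hα hα1 hs0 hp hμ₂ h₂s.le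
  have hbs : 0 < bHat α s p₀ μs :=
    lt_of_lt_of_le hb1 (hb12.trans hb2s)
  -- ratio bounds
  have hr2 : bHat α s p₀ μ₂ / aHat α p₀ μ₂ μs < 1 / 2 :=
    lt_of_le_of_lt (div_le_div₀ hbs.le hb2s hpos (ha43.trans ha32)) hratio
  have hr3 : bHat α s p₀ μs / aHat α p₀ μs μ₃ < 1 / 2 :=
    lt_of_le_of_lt (div_le_div₀ hbs.le (le_refl _) hpos ha43) hratio
  -- the three key inequalities
  have k1 := key_lemma hb1 hb12 ha21 ha2 hr2
  have k2 := key_lemma (lt_of_lt_of_le hb1 hb12) hb2s ha32 ha3 hr3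
  have k3 := key_lemma hbs (le_refl _) ha43 hpos hratio
  have hC : (0:ℝ) ≤ μs * Real.exp (-μs) := by positivity
  refine ⟨?_, ?_, ?_⟩
  · rw [Rtilde, Rtilde, if_pos h₂s, if_pos (h₁₂.trans h₂s)]
    rw [mul_assoc (μs * Real.exp (-μs)), mul_assoc (μs * Real.exp (-μs))]
    have h := mul_le_mul_of_nonneg_left k1 hC
    linarith
  · rw [Rtilde, Rtilde, if_neg (not_lt.2 hs₃.le), if_pos h₂s]
    rw [mul_assoc (μs * Real.exp (-μs)), mul_assoc (μs * Real.exp (-μs))]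
    have h := mul_le_mul_of_nonneg_left k2 hC
    linarith
  · rw [Rtilde, Rtilde, if_neg (not_lt.2 (hs₃.trans h₃₄).le), if_neg (not_lt.2 hs₃.le)]
    rw [mul_assoc (μs * Real.exp (-μs)), mul_assoc (μs * Real.exp (-μs))]
    have h := mul_le_mul_of_nonneg_left k3 hC
    linarith
end

section
/- Let 0 < ν_d ≤ ν_d′ and 0 < ν_s ≤ ν_s′. Assume ĉₑ(ν_d,ν_s′) + b̂ₑ(ν_d) > 0 and b̂ₑ(ν_d)/(ĉₑ(ν_d,ν_s′) + b̂ₑ(ν_d)) < 1/2. Then (ĉₑ(ν_d,ν_s′) + b̂ₑ(ν_d))·(1 − h(b̂ₑ(ν_d)/(ĉₑ(ν_d,ν_s′) + b̂ₑ(ν_d)))) ≤ (ĉₑ(ν_d′,ν_s) + b̂ₑ(ν_d′))·(1 − h(b̂ₑ(ν_d′)/(ĉₑ(ν_d′,ν_s) + b̂ₑ(ν_d′)))); i.e., the quantity (ĉₑ + b̂ₑ)(1 − h(b̂ₑ/(ĉₑ + b̂ₑ))) is monotonically increasing in the true decoy intensity ν_d and monotonically decreasing in the true signal intensity ν_s.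 -/
/-- Estimate `b̂ₑ` with true decoy intensity `νd` and assumed decoy intensity `μd`. -/
noncomputable def bE (α s p₀ μd νd : ℝ) : ℝ :=
  ((s * (1 - Real.exp (-α * νd)) + p₀ / 2) * Real.exp μd - p₀ / 2) / μd

/-- Estimate `ĉₑ` with true intensities `νd, νs` and assumed intensities `μd, μs`. -/
noncomputable def cE (α s p₀ μd μs νd νs : ℝ) : ℝ :=
  (μs ^ 2 * Real.exp μd * ((1 - s) * (1 - Real.exp (-α * νd)) + (p₀ / 2) * (1 - Real.exp (-μd)))
    - μd ^ 2 * Real.exp μs * ((1 - s) * (1 - Real.exp (-α * νs)) + (p₀ / 2) * (1 - Real.exp (-μs))))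
  / (μd * μs * (μs - μd))

/-- Natural-log version of `(b+c)·(1 − h(b/(b+c)))·log 2`. -/
noncomputable def Fl (b c : ℝ) : ℝ :=
  (b + c) * Real.log 2 + b * Real.log b + c * Real.log c - (b + c) * Real.log (b + c)

lemma conv {b c : ℝ} (hb : 0 < b) (hc : 0 < c) :
    (c + b) * (1 - binEnt (b / (c + b))) = Fl b c / Real.log 2 := by
  have hbc : 0 < c + b := by linarith
  have hl2 : Real.log 2 ≠ 0 := by
    have := Real.log_pos one_lt_two; linarith
  have h1 : (1:ℝ) - b / (c + b) = c / (c + b) := by field_simp; ring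
  rw [binEnt, h1, Real.logb, Real.logb,
    Real.log_div hb.ne' hbc.ne', Real.log_div hc.ne' hbc.ne', Fl]
  field_simp
  ring_nf

lemma monoC {b c₁ c₂ : ℝ} (hb : 0 < b) (h1 : b ≤ c₁) (h12 : c₁ ≤ c₂) :
    Fl b c₁ ≤ Fl b c₂ := by
  have key : ∀ c ∈ Set.Icc c₁ c₂, HasDerivAt (fun c => Fl b c)
      (Real.log 2 + (Real.log c + 1) - (Real.log (b + c) + 1)) c := by
    intro c hc
    have hc0 : 0 < c := lt_of_lt_of_le (hb.trans_le h1) hc.1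
    have hbc : 0 < b + c := by linarith
    have h1' : HasDerivAt (fun c : ℝ => c * Real.log c) (Real.log c + 1) c :=
      Real.hasDerivAt_mul_log hc0.ne'
    have h2' : HasDerivAt (fun c : ℝ => (b + c) * Real.log (b + c))
        ((Real.log (b + c) + 1) * 1) c :=
      (Real.hasDerivAt_mul_log hbc.ne').comp c ((hasDerivAt_id c).const_add b)
    have h3' : HasDerivAt (fun c : ℝ => (b + c) * Real.log 2) (Real.log 2) c := by
      simpa using (((hasDerivAt_id c).const_add b).mul_const (Real.log 2))
    have h4' : HasDerivAt (fun _ : ℝ => b * Real.log b) 0 c := hasDerivAt_const _ _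
    have := ((h3'.add h4').add h1').sub h2'
    exact (this.congr_of_eventuallyEq (Filter.Eventually.of_forall fun x => rfl)).congr_deriv (by ring)
  have hmono : MonotoneOn (fun c => Fl b c) (Set.Icc c₁ c₂) := by
    apply monotoneOn_of_deriv_nonneg (convex_Icc c₁ c₂)
    · exact fun c hc => (key c hc).differentiableAt.continuousAt.continuousWithinAt
    · intro c hc
      rw [interior_Icc] at hc
      exact ((key c ⟨hc.1.le, hc.2.le⟩).differentiableAt).differentiableWithinAt
    · intro c hc
      rw [interior_Icc] at hc
      have hc0 : 0 < c := lt_of_lt_of_le (hb.trans_le h1) hc.1.le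
      rw [(key c ⟨hc.1.le, hc.2.le⟩).deriv]
      have : Real.log (b + c) ≤ Real.log 2 + Real.log c := by
        rw [← Real.log_mul two_ne_zero hc0.ne']
        exact Real.log_le_log (by linarith) (by nlinarith [hc.1, hc.2])
      linarith
  exact hmono ⟨le_refl _, h12⟩ ⟨h12, le_refl _⟩ h12

lemma monoLine {K b₁ b₂ c₁ : ℝ} (hK : 1 ≤ K) (hb : 0 < b₁) (hbc : b₁ ≤ c₁)
    (hcK : c₁ ≤ K * b₁) (hb12 : b₁ ≤ b₂) :
    Fl b₁ c₁ ≤ Fl b₂ (c₁ + K * (b₂ - b₁)) := by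
  set G : ℝ → ℝ := fun t => Fl (b₁ + t) (c₁ + K * t) with hG
  have key : ∀ t, 0 ≤ t → HasDerivAt G
      ((1 + K) * Real.log 2 + ((Real.log (b₁ + t) + 1) + K * (Real.log (c₁ + K * t) + 1))
        - (Real.log ((b₁ + t) + (c₁ + K * t)) + 1) * (1 + K)) t := by
    intro t ht
    have hbt : 0 < b₁ + t := by linarith
    have hct : 0 < c₁ + K * t := by nlinarith
    have hsum : 0 < (b₁ + t) + (c₁ + K * t) := by linarith
    have hlb : HasDerivAt (fun t : ℝ => b₁ + t) 1 t := (hasDerivAt_id t).const_add b₁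
    have hlc : HasDerivAt (fun t : ℝ => c₁ + K * t) K t := by
      simpa using ((hasDerivAt_id t).const_mul K).const_add c₁
    have hls : HasDerivAt (fun t : ℝ => (b₁ + t) + (c₁ + K * t)) (1 + K) t := hlb.add hlc
    have h1' : HasDerivAt (fun t : ℝ => (b₁ + t) * Real.log (b₁ + t))
        ((Real.log (b₁ + t) + 1) * 1) t :=
      (Real.hasDerivAt_mul_log hbt.ne').comp t hlb
    have h2' : HasDerivAt (fun t : ℝ => (c₁ + K * t) * Real.log (c₁ + K * t))
        ((Real.log (c₁ + K * t) + 1) * K) t :=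
      by have := (Real.hasDerivAt_mul_log hct.ne').comp t hlc; exact this
    have h3' : HasDerivAt (fun t : ℝ => ((b₁ + t) + (c₁ + K * t)) * Real.log ((b₁ + t) + (c₁ + K * t)))
        ((Real.log ((b₁ + t) + (c₁ + K * t)) + 1) * (1 + K)) t :=
      by have := (Real.hasDerivAt_mul_log hsum.ne').comp t hls; exact this
    have h4' : HasDerivAt (fun t : ℝ => ((b₁ + t) + (c₁ + K * t)) * Real.log 2)
        ((1 + K) * Real.log 2) t := by
      simpa [mul_comm] using hls.mul_const (Real.log 2)
    have := ((h4'.add h1').add h2').sub h3'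
    simp only [hG, Fl]
    exact (this.congr_of_eventuallyEq (Filter.Eventually.of_forall fun x => rfl)).congr_deriv (by ring)
  have hmono : MonotoneOn G (Set.Icc 0 (b₂ - b₁)) := by
    apply monotoneOn_of_deriv_nonneg (convex_Icc _ _)
    · exact fun t ht => (key t ht.1).differentiableAt.continuousAt.continuousWithinAt
    · intro t ht
      rw [interior_Icc] at ht
      exact (key t ht.1.le).differentiableAt.differentiableWithinAt
    · intro t ht
      rw [interior_Icc] at ht
      rw [(key t ht.1.le).deriv]
      have ht0 : 0 < t := ht.1
      set b := b₁ + t with hbdef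
      set c := c₁ + K * t with hcdef
      have hb0 : 0 < b := by rw [hbdef]; linarith
      have hc0 : 0 < c := by rw [hcdef]; nlinarith
      have hbc' : b ≤ c := by rw [hbdef, hcdef]; nlinarith
      have hcK' : c ≤ K * b := by rw [hbdef, hcdef]; nlinarith
      have hsum : 0 < b + c := by linarith
      have hA : Real.log (b + c) - (Real.log 2 + Real.log b) ≤ (b + c) / (2 * b) - 1 := by
        have h := Real.log_le_sub_one_of_pos (show (0:ℝ) < (b + c) / (2 * b) by positivity)
        rwa [Real.log_div hsum.ne' (by positivity : (2 * b : ℝ) ≠ 0),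
          Real.log_mul two_ne_zero hb0.ne'] at h
      have hB : Real.log (b + c) - (Real.log 2 + Real.log c) ≤ (b + c) / (2 * c) - 1 := by
        have h := Real.log_le_sub_one_of_pos (show (0:ℝ) < (b + c) / (2 * c) by positivity)
        rwa [Real.log_div hsum.ne' (by positivity : (2 * c : ℝ) ≠ 0),
          Real.log_mul two_ne_zero hc0.ne'] at h
      have hK0 : (0:ℝ) ≤ K := by linarith
      have hBK : K * (Real.log (b + c) - (Real.log 2 + Real.log c)) ≤ K * ((b + c) / (2 * c) - 1) :=
        mul_le_mul_of_nonneg_left hB hK0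
      have hfrac : ((b + c) / (2 * b) - 1) + K * ((b + c) / (2 * c) - 1) ≤ 0 := by
        have e1 : (b + c) / (2 * b) - 1 = (c - b) / (2 * b) := by
          field_simp; ring
        have e2 : (b + c) / (2 * c) - 1 = (b - c) / (2 * c) := by
          field_simp; ring
        rw [e1, e2]
        have hmul : (c - b) * c ≤ (c - b) * (K * b) :=
          mul_le_mul_of_nonneg_left hcK' (by linarith)
        rw [mul_div_assoc',
          div_add_div _ _ (by positivity : (2*b:ℝ) ≠ 0) (by positivity : (2*c:ℝ) ≠ 0)]
        apply div_nonpos_of_nonpos_of_nonneg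
        · nlinarith [hmul]
        · positivity
      linarith
  have := hmono (Set.mem_Icc.mpr ⟨le_refl 0, by linarith⟩)
    (Set.mem_Icc.mpr ⟨by linarith, le_refl _⟩) (by linarith)
  simpa [hG] using this

section
variable {α s p₀ μd μs νd νd' νs νs' : ℝ}

lemma bE_pos (hα : 0 < α) (hs0 : 0 ≤ s) (hp : 0 < p₀) (hμd : 0 < μd) (hν : 0 < νd) :
    0 < bE α s p₀ μd νd := by
  unfold bE
  apply div_pos _ hμd
  have h1 : Real.exp (-α * νd) ≤ 1 := Real.exp_le_one_iff.mpr (by nlinarith)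
  have h2 : (1:ℝ) + μd ≤ Real.exp μd := by
    have := Real.add_one_le_exp μd; linarith
  nlinarith [Real.exp_pos μd, mul_nonneg hs0 (by linarith : (0:ℝ) ≤ 1 - Real.exp (-α * νd))]

lemma bE_mono (hα : 0 < α) (hs0 : 0 ≤ s) (hμd : 0 < μd) (hν : 0 < νd) (hν' : νd ≤ νd') :
    bE α s p₀ μd νd ≤ bE α s p₀ μd νd' := by
  unfold bE
  have h1 : Real.exp (-α * νd') ≤ Real.exp (-α * νd) := Real.exp_le_exp.mpr (by nlinarith)
  have hE := Real.exp_pos μd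
  rw [div_le_div_iff_of_pos_right hμd]
  nlinarith [mul_le_mul_of_nonneg_left h1 hs0]

lemma cE_mono_s (hα : 0 < α) (hs : s < 1 / 2) (hμd : 0 < μd) (hμ : μd < μs)
    (hν : 0 < νs) (hν' : νs ≤ νs') :
    cE α s p₀ μd μs νd νs' ≤ cE α s p₀ μd μs νd νs := by
  unfold cE
  have hD : 0 < μd * μs * (μs - μd) := by
    apply mul_pos (mul_pos hμd (by linarith)); linarith
  rw [div_le_div_iff_of_pos_right hD]
  have h1 : Real.exp (-α * νs') ≤ Real.exp (-α * νs) := Real.exp_le_exp.mpr (by nlinarith)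
  have h2 : (0:ℝ) ≤ 1 - s := by linarith
  nlinarith [mul_le_mul_of_nonneg_left h1 h2, Real.exp_pos μs, sq_nonneg μd,
    mul_pos (Real.exp_pos μs) (pow_pos hμd 2)]

lemma cE_mono_d (hα : 0 < α) (hs : s < 1 / 2) (hμd : 0 < μd) (hμ : μd < μs)
    (hν : 0 < νd) (hν' : νd ≤ νd') :
    cE α s p₀ μd μs νd νs ≤ cE α s p₀ μd μs νd' νs := by
  unfold cE
  have hD : 0 < μd * μs * (μs - μd) := by
    apply mul_pos (mul_pos hμd (by linarith)); linarith
  rw [div_le_div_iff_of_pos_right hD]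
  have h1 : Real.exp (-α * νd') ≤ Real.exp (-α * νd) := Real.exp_le_exp.mpr (by nlinarith)
  have h2 : (0:ℝ) ≤ 1 - s := by linarith
  nlinarith [mul_le_mul_of_nonneg_left h1 h2, Real.exp_pos μd,
    mul_pos (Real.exp_pos μd) (pow_pos (lt_trans hμd hμ) 2)]

lemma cE_lin (hμd : 0 < μd) (hμ : μd < μs) (hs0' : 0 < s) :
    cE α s p₀ μd μs νd' νs = cE α s p₀ μd μs νd νs
      + ((1 - s) * μs / (s * (μs - μd))) * (bE α s p₀ μd νd' - bE α s p₀ μd νd) := by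
  unfold cE bE
  have h1 : μd ≠ 0 := hμd.ne'
  have h2 : μs ≠ 0 := (lt_trans hμd hμ).ne'
  have h3 : μs - μd ≠ 0 := by intro h; linarith [sub_eq_zero.mp h]
  field_simp
  ring

lemma cE_struct (hα : 0 < α) (hs : s < 1 / 2) (hp : 0 < p₀) (hμd : 0 < μd) (hμ : μd < μs)
    (hs0' : 0 < s) (hνd : 0 < νd) (hνs : 0 < νs) :
    cE α s p₀ μd μs νd νs ≤ ((1 - s) * μs / (s * (μs - μd))) * bE α s p₀ μd νd := by
  have h1 : μd ≠ 0 := hμd.ne'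
  have hμs : 0 < μs := lt_trans hμd hμ
  have hsd : 0 < μs - μd := by linarith
  have key : ((1 - s) * μs / (s * (μs - μd))) * bE α s p₀ μd νd - cE α s p₀ μd μs νd νs
      = ((1 - s) / s - 1) * (μs * (p₀ / 2) * (Real.exp μd - 1)) / (μd * (μs - μd))
        + μd * Real.exp μs * ((1 - s) * (1 - Real.exp (-α * νs))
            + (p₀ / 2) * (1 - Real.exp (-μs))) / (μs * (μs - μd)) := by
    unfold cE bE
    rw [Real.exp_neg μd]
    field_simp
    ring
  have h2 : (0:ℝ) ≤ (1 - s) / s - 1 := by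
    rw [le_sub_iff_add_le, le_div_iff₀ hs0']; linarith
  have h3 : (0:ℝ) ≤ Real.exp μd - 1 := by
    have := Real.add_one_le_exp μd; linarith
  have h4 : Real.exp (-α * νs) ≤ 1 := Real.exp_le_one_iff.mpr (by nlinarith)
  have h5 : Real.exp (-μs) ≤ 1 := Real.exp_le_one_iff.mpr (by linarith)
  have t1 : (0:ℝ) ≤ ((1 - s) / s - 1) * (μs * (p₀ / 2) * (Real.exp μd - 1)) / (μd * (μs - μd)) := by
    apply div_nonneg _ (by positivity)
    exact mul_nonneg h2 (mul_nonneg (by positivity) h3)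
  have t2 : (0:ℝ) ≤ μd * Real.exp μs * ((1 - s) * (1 - Real.exp (-α * νs))
      + (p₀ / 2) * (1 - Real.exp (-μs))) / (μs * (μs - μd)) := by
    apply div_nonneg _ (by positivity)
    apply mul_nonneg (by positivity)
    have := Real.exp_pos (-α * νs)
    nlinarith
  linarith [key, t1, t2]

end

theorem stmt16 (α s p₀ μd μs νd νd' νs νs' : ℝ)
    (hα : 0 < α) (hα1 : α ≤ 1) (hs0 : 0 ≤ s) (hs : s < 1 / 2) (hp : 0 < p₀)
    (hμd : 0 < μd) (hμ : μd < μs)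
    (hνd : 0 < νd) (hνd' : νd ≤ νd') (hνs : 0 < νs) (hνs' : νs ≤ νs')
    (hpos : 0 < cE α s p₀ μd μs νd νs' + bE α s p₀ μd νd)
    (hratio : bE α s p₀ μd νd / (cE α s p₀ μd μs νd νs' + bE α s p₀ μd νd) < 1 / 2) :
    (cE α s p₀ μd μs νd νs' + bE α s p₀ μd νd) *
        (1 - binEnt (bE α s p₀ μd νd / (cE α s p₀ μd μs νd νs' + bE α s p₀ μd νd)))
      ≤ (cE α s p₀ μd μs νd' νs + bE α s p₀ μd νd') *
        (1 - binEnt (bE α s p₀ μd νd' / (cE α s p₀ μd μs νd' νs + bE α s p₀ μd νd'))) := by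
  have hμs : 0 < μs := lt_trans hμd hμ
  have hl2 : 0 < Real.log 2 := Real.log_pos one_lt_two
  set b₁ := bE α s p₀ μd νd with hb₁def
  set b₂ := bE α s p₀ μd νd' with hb₂def
  set ca := cE α s p₀ μd μs νd νs' with hcadef
  set cb := cE α s p₀ μd μs νd νs with hcbdef
  set cc := cE α s p₀ μd μs νd' νs with hccdef
  have hb1 : 0 < b₁ := bE_pos hα hs0 hp hμd hνd
  have hb1ca : b₁ < ca := by
    have h := (div_lt_iff₀ hpos).mp hratio; linarith
  have hcacb : ca ≤ cb := cE_mono_s hα hs hμd hμ hνs hνs'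
  have hb12 : b₁ ≤ b₂ := bE_mono hα hs0 hμd hνd hνd'
  have hca0 : 0 < ca := hb1.trans hb1ca
  have hb2 : 0 < b₂ := hb1.trans_le hb12
  have main : Fl b₁ ca ≤ Fl b₂ cc ∧ 0 < cc := by
    rcases eq_or_lt_of_le hs0 with hsz | hsp
    · -- s = 0 : b is constant, c is monotone
      have hbb : b₂ = b₁ := by
        rw [hb₁def, hb₂def]; unfold bE; rw [← hsz]; ring_nf
      have hcbcc : cb ≤ cc := cE_mono_d hα hs hμd hμ hνd hνd'
      have hcc0 : 0 < cc := lt_of_lt_of_le hca0 (hcacb.trans hcbcc)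
      exact ⟨by rw [hbb]; exact monoC hb1 hb1ca.le (hcacb.trans hcbcc), hcc0⟩
    · -- s > 0 : move along the line of slope K
      set K := (1 - s) * μs / (s * (μs - μd)) with hKdef
      have hsd : 0 < s * (μs - μd) := by apply mul_pos hsp; linarith
      have hK1 : 1 ≤ K := by
        rw [hKdef, le_div_iff₀ hsd]; nlinarith
      have hstruct : cb ≤ K * b₁ := cE_struct hα hs hp hμd hμ hsp hνd hνs
      have hlin : cc = cb + K * (b₂ - b₁) := cE_lin hμd hμ hsp
      have step1 : Fl b₁ ca ≤ Fl b₁ cb := monoC hb1 hb1ca.le hcacb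
      have step2 : Fl b₁ cb ≤ Fl b₂ (cb + K * (b₂ - b₁)) :=
        monoLine hK1 hb1 (hb1ca.le.trans hcacb) hstruct hb12
      have hcc0 : 0 < cc := by
        rw [hlin]; nlinarith [hca0.trans_le hcacb]
      exact ⟨by rw [hlin]; exact step1.trans step2, hcc0⟩
  obtain ⟨hmain, hcc0⟩ := main
  rw [conv hb1 hca0, conv hb2 hcc0, div_le_div_iff_of_pos_right hl2]
  exact hmain
end

section
/- The function F_a is monotonically decreasing on (0, μ_s), and the supremum of F_a over μ_d ∈ (0, μ_s) equals the limit of F_a(μ_d) as μ_d → 0⁺, which equals α/(1+ε) + p₀. -/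
open Real Set Filter


lemma H_nonneg (b c : ℝ) (hb0 : 0 ≤ b) (hb1 : b ≤ 1) (hc : 1 ≤ c) {t : ℝ} (ht : 0 ≤ t) :
    0 ≤ t^2*(c*exp t - b^2*exp (b*t)) - 2*t*(c*exp t - b*exp (b*t))
      + 2*(c*exp t - exp (b*t) - (c-1)) := by
  set H : ℝ → ℝ := fun t => t^2*(c*exp t - b^2*exp (b*t)) - 2*t*(c*exp t - b*exp (b*t))
      + 2*(c*exp t - exp (b*t) - (c-1)) with hH
  have hder : ∀ x : ℝ, HasDerivAt H (x^2*(c*exp x - b^3*exp (b*x))) x := by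
    intro x
    have he : HasDerivAt (fun x : ℝ => exp x) (exp x) x := Real.hasDerivAt_exp x
    have hbe : HasDerivAt (fun x : ℝ => exp (b*x)) (b * exp (b*x)) x := by
      exact ((Real.hasDerivAt_exp (b*x)).comp x ((hasDerivAt_id x).const_mul b)).congr_deriv (by ring)
    have h := (((hasDerivAt_pow 2 x).mul ((he.const_mul c).sub (hbe.const_mul (b^2)))).sub
        (((hasDerivAt_id x).const_mul 2).mul ((he.const_mul c).sub (hbe.const_mul b)))).add
        ((((he.const_mul c).sub hbe).sub (hasDerivAt_const x (c-1))).const_mul 2)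
    exact h.congr_deriv (by simp only [id_eq, Pi.sub_apply]; push_cast; ring)
  have hmono : MonotoneOn H (Ici 0) := by
    apply monotoneOn_of_deriv_nonneg (convex_Ici 0)
      (fun x _ => (hder x).differentiableAt.continuousAt.continuousWithinAt)
      (fun x _ => (hder x).differentiableAt.differentiableWithinAt)
    intro x hx
    rw [(hder x).deriv]
    rw [interior_Ici] at hx
    have hxpos : (0:ℝ) < x := hx
    have h3 : b^3 ≤ 1 := pow_le_one₀ hb0 hb1
    have h1 : b^3 * exp (b*x) ≤ c * exp x := by
      have h2 : exp (b*x) ≤ exp x := exp_le_exp.2 (by nlinarith)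
      nlinarith [exp_pos (b*x), exp_pos x]
    exact mul_nonneg (sq_nonneg x) (by linarith)
  have h0 : H 0 = 0 := by simp [hH]
  have := hmono (self_mem_Ici) (mem_Ici.2 ht) ht
  rw [h0] at this
  exact this

lemma phi_convex (b c : ℝ) (hb0 : 0 ≤ b) (hb1 : b ≤ 1) (hc : 1 ≤ c) :
    ConvexOn ℝ (Ioi 0) (fun t => (c*exp t - exp (b*t) - (c-1))/t) := by
  set G : ℝ → ℝ := fun t => c*exp t - exp (b*t) - (c-1) with hG
  set G' : ℝ → ℝ := fun t => c*exp t - b*exp (b*t) with hG'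
  set G'' : ℝ → ℝ := fun t => c*exp t - b^2*exp (b*t) with hG''
  have hbe : ∀ x : ℝ, HasDerivAt (fun x : ℝ => exp (b*x)) (b * exp (b*x)) x := by
    intro x
    exact ((Real.hasDerivAt_exp (b*x)).comp x ((hasDerivAt_id x).const_mul b)).congr_deriv (by ring)
  have hGd : ∀ x : ℝ, HasDerivAt G (G' x) x := fun x => by
    exact ((((Real.hasDerivAt_exp x).const_mul c).sub (hbe x)).sub (hasDerivAt_const x (c-1))).congr_deriv (by simp [hG'])
  have hGd' : ∀ x : ℝ, HasDerivAt G' (G'' x) x := fun x => by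
    have h := ((Real.hasDerivAt_exp x).const_mul c).sub ((hbe x).const_mul b)
    exact h.congr_deriv (by simp only [hG'']; ring)
  apply convexOn_of_hasDerivWithinAt2_nonneg (convex_Ioi 0)
    (f' := fun t => (G' t * t - G t)/t^2)
    (f'' := fun t => (t^2*G'' t - 2*t*G' t + 2*G t)/t^3)
  · exact ContinuousOn.div (by fun_prop) continuousOn_id (fun x hx => ne_of_gt hx)
  · rw [interior_Ioi]
    intro x hx
    have hx0 : x ≠ 0 := ne_of_gt hx
    have h := (hGd x).div (hasDerivAt_id x) hx0
    exact (h.congr_deriv (by simp only [id_eq, mul_one])).hasDerivWithinAt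
  · rw [interior_Ioi]
    intro x hx
    have hx0 : x ≠ 0 := ne_of_gt hx
    have h := (((hGd' x).mul (hasDerivAt_id x)).sub (hGd x)).div (hasDerivAt_pow 2 x)
      (pow_ne_zero 2 hx0)
    exact (h.congr_deriv (by simp only [id_eq, Pi.sub_apply, Pi.mul_apply]; push_cast; field_simp; ring)).hasDerivWithinAt
  · rw [interior_Ioi]
    intro x hx
    have h := H_nonneg b c hb0 hb1 hc (le_of_lt hx)
    apply div_nonneg _ (pow_nonneg (le_of_lt hx) 3)
    simpa [hG, hG', hG''] using h

/-- The function `F_a(μ_d)` appearing in Lemma 4 of the paper: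
`f_a` evaluated at the worst-case true intensities, with `α̃ = α/(1+ε)`. -/
noncomputable def Fa (α p₀ ε μts μs μd : ℝ) : ℝ :=
  (μs ^ 2 * Real.exp μd * ((1 - Real.exp (-(α / (1 + ε)) * μd)) + p₀ * (1 - Real.exp (-μd)))
    - μd ^ 2 * Real.exp μs * ((1 - Real.exp (-α * μts)) + p₀ * (1 - Real.exp (-μs))))
  / (μd * μs * (μs - μd))

theorem stmt17 (α s p₀ ε μts μs : ℝ)
    (hα : 0 < α) (hα1 : α ≤ 1) (hs0 : 0 ≤ s) (hs : s < 1 / 2) (hp : 0 < p₀)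
    (hε : 0 < ε) (hμts : 0 < μts) (hμs : 0 < μs) (hμs' : μs ≤ (1 + ε) * μts) :
    AntitoneOn (fun μd => Fa α p₀ ε μts μs μd) (Set.Ioo 0 μs) ∧
    sSup ((fun μd => Fa α p₀ ε μts μs μd) '' Set.Ioo 0 μs) = α / (1 + ε) + p₀ ∧
    Filter.Tendsto (fun μd => Fa α p₀ ε μts μs μd)
      (nhdsWithin 0 (Set.Ioo 0 μs)) (nhds (α / (1 + ε) + p₀)) := by
  have hε1 : (0:ℝ) < 1 + ε := by linarith
  set b : ℝ := 1 - α/(1+ε) with hbdef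
  set c : ℝ := 1 + p₀ with hcdef
  set φ : ℝ → ℝ := fun t => (c*Real.exp t - Real.exp (b*t) - (c-1))/t with hφdef
  set ψ : ℝ := Real.exp μs * ((1 - Real.exp (-α * μts)) + p₀ * (1 - Real.exp (-μs)))/μs
    with hψdef
  have hαε : α/(1+ε) ≤ 1 := by rw [div_le_one hε1]; linarith
  have h0αε : 0 < α/(1+ε) := by positivity
  have hb0 : 0 ≤ b := by rw [hbdef]; linarith
  have hb1 : b ≤ 1 := by rw [hbdef]; linarith
  have hc1 : 1 ≤ c := by rw [hcdef]; linarith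
  have hconvex : ConvexOn ℝ (Ioi 0) φ := phi_convex b c hb0 hb1 hc1
  have hnum : ∀ t : ℝ, Real.exp t * ((1 - Real.exp (-(α/(1+ε)) * t)) + p₀ * (1 - Real.exp (-t)))
      = c*Real.exp t - Real.exp (b*t) - (c-1) := by
    intro t
    rw [hbdef, hcdef, show (1 - α/(1+ε))*t = t + (-(α/(1+ε))*t) from by ring, Real.exp_add,
      Real.exp_neg t]
    have h := Real.exp_ne_zero t
    field_simp
    ring
  have hφμs : φ μs ≤ ψ := by
    rw [hφdef]
    simp only [← hnum μs, hψdef]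
    have hE : Real.exp (-α * μts) ≤ Real.exp (-(α / (1 + ε)) * μs) := by
      rw [Real.exp_le_exp, neg_mul, neg_mul, neg_le_neg_iff, div_mul_eq_mul_div,
        div_le_iff₀ hε1]
      nlinarith
    rw [div_le_div_iff₀ hμs hμs]
    nlinarith [mul_le_mul_of_nonneg_left hE (by positivity : (0:ℝ) ≤ Real.exp μs * μs)]
  have hFa : ∀ t ∈ Ioo 0 μs, Fa α p₀ ε μts μs t = (μs*φ t - t*ψ)/(μs - t) := by
    intro t ht
    obtain ⟨ht0, htμ⟩ := ht
    have hμt : μs - t ≠ 0 := by intro h; linarith [ht0]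
    rw [Fa, mul_assoc (μs^2), hnum t, hφdef, hψdef]
    field_simp
  have hanti : AntitoneOn (fun μd => Fa α p₀ ε μts μs μd) (Set.Ioo 0 μs) := by
    intro x hx y hy hxy
    rcases eq_or_lt_of_le hxy with rfl | hlt
    · exact le_refl _
    simp only
    rw [hFa x hx, hFa y hy]
    have hx0 := hx.1; have hyμ := hy.2; have hxμ := hx.2; have hy0 := hy.1
    have hμx : (0:ℝ) < μs - x := by linarith
    have hμy : (0:ℝ) < μs - y := by linarith
    rw [div_le_div_iff₀ hμy hμx]
    have ha : (0:ℝ) ≤ (μs - y)/(μs - x) := div_nonneg (le_of_lt hμy) (le_of_lt hμx)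
    have hb2 : (0:ℝ) ≤ (y - x)/(μs - x) := div_nonneg (by linarith) (le_of_lt hμx)
    have hab : (μs - y)/(μs - x) + (y - x)/(μs - x) = 1 := by field_simp; ring
    have hcv := hconvex.2 (mem_Ioi.2 hx0) (mem_Ioi.2 hμs) ha hb2 hab
    simp only [smul_eq_mul] at hcv
    have harg : (μs - y)/(μs - x) * x + (y - x)/(μs - x) * μs = y := by
      field_simp
      ring
    rw [harg] at hcv
    have h1 : (μs - x) * φ y ≤ (μs - y) * φ x + (y - x) * φ μs := by
      calc (μs - x) * φ y ≤ (μs - x) * ((μs - y)/(μs - x)*φ x + (y - x)/(μs - x)*φ μs) :=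
            mul_le_mul_of_nonneg_left hcv (le_of_lt hμx)
        _ = (μs - y)*φ x + (y - x)*φ μs := by field_simp
    have h2 : (y - x) * φ μs ≤ (y - x) * ψ := mul_le_mul_of_nonneg_left hφμs (by linarith)
    nlinarith [mul_le_mul_of_nonneg_left h1 (le_of_lt hμs),
      mul_le_mul_of_nonneg_left h2 (le_of_lt hμs)]
  have hN : HasDerivAt (fun t => c*Real.exp t - Real.exp (b*t) - (c-1)) (c - b) 0 := by
    have hbe : ∀ x : ℝ, HasDerivAt (fun x : ℝ => Real.exp (b*x)) (b * Real.exp (b*x)) x := by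
      intro x
      exact ((Real.hasDerivAt_exp (b*x)).comp x
        ((hasDerivAt_id x).const_mul b)).congr_deriv (by ring)
    have h := (((Real.hasDerivAt_exp 0).const_mul c).sub (hbe 0)).sub (hasDerivAt_const 0 (c-1))
    exact h.congr_deriv (by simp)
  have hslope_eq : slope (fun t => c*Real.exp t - Real.exp (b*t) - (c-1)) 0 = φ := by
    funext t
    rw [slope_def_field, hφdef]
    simp only [mul_zero, Real.exp_zero, mul_one, sub_zero]
    congr 1
    ring
  have hφlim : Tendsto φ (nhdsWithin 0 (Ioo 0 μs)) (nhds (c - b)) := by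
    rw [← hslope_eq]
    exact (hasDerivAt_iff_tendsto_slope.1 hN).mono_left
      (nhdsWithin_mono 0 (fun x hx => ne_of_gt hx.1))
  have hid : Tendsto (fun t:ℝ => t) (nhdsWithin 0 (Ioo 0 μs)) (nhds 0) :=
    tendsto_id.mono_left nhdsWithin_le_nhds
  have hlim0 : Tendsto (fun t => (μs*φ t - t*ψ)/(μs - t)) (nhdsWithin 0 (Ioo 0 μs))
      (nhds ((μs*(c - b) - 0*ψ)/(μs - 0))) :=
    ((tendsto_const_nhds.mul hφlim).sub (hid.mul tendsto_const_nhds)).div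
      (tendsto_const_nhds.sub hid) (by simpa using hμs.ne')
  have hval : (μs*(c - b) - 0*ψ)/(μs - 0) = α/(1+ε) + p₀ := by
    rw [hbdef, hcdef]
    have := hμs.ne'
    field_simp
    ring
  have htend : Filter.Tendsto (fun μd => Fa α p₀ ε μts μs μd)
      (nhdsWithin 0 (Set.Ioo 0 μs)) (nhds (α / (1 + ε) + p₀)) := by
    rw [← hval]
    apply Tendsto.congr' _ hlim0
    filter_upwards [self_mem_nhdsWithin] with t ht
    exact (hFa t ht).symm
  refine ⟨hanti, ?_, htend⟩
  have hne : (nhdsWithin (0:ℝ) (Ioo 0 μs)).NeBot := by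
    apply mem_closure_iff_nhdsWithin_neBot.1
    rw [closure_Ioo (ne_of_lt hμs)]
    exact ⟨le_refl 0, le_of_lt hμs⟩
  apply IsLUB.csSup_eq
  · constructor
    · rintro v ⟨x, hx, rfl⟩
      refine ge_of_tendsto htend ?_
      have h1 : ∀ᶠ y in nhdsWithin (0:ℝ) (Ioo 0 μs), y < x :=
        Filter.Eventually.filter_mono nhdsWithin_le_nhds (eventually_lt_nhds hx.1)
      filter_upwards [h1, self_mem_nhdsWithin] with y hyx hyS
      exact hanti hyS hx (le_of_lt hyx)
    · intro u hu
      refine le_of_tendsto htend ?_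
      filter_upwards [self_mem_nhdsWithin] with y hy
      exact hu ⟨y, hy, rfl⟩
  · exact ⟨Fa α p₀ ε μts μs (μs/2), ⟨μs/2, ⟨by positivity, by linarith⟩, rfl⟩⟩
end
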